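/- Let α ∈ (−1/2, 1/2) and M > 0. For integers n ≥ 1 and real numbers 0 ≤ v ≤ s, define A_n(v,s) = n^{2α+1} ∫₀^{⌊nv⌋/n} ((s − u)^α − (⌊ns⌋/n − u)^α)((v − u)^α − (⌊nv⌋/n − u)^α) du, where ⌊·⌋ denotes the floor function. Then sup over all n ≥ 1 and all 0 ≤ v ≤ s ≤ M of |A_n(v,s)| is finite; in fact |A_n(v,s)| ≤ ∫₀^∞ ((z+1)^α − z^α)² dz for all such n, v, s. -/

import Mathlib

open MeasureTheory Set
open Real


/-- MVT bound. -/
lemma aux_mvt (α : ℝ) (hα1 : α < 1) {z : ℝ} (hz : 0 < z) :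
    |(z+1)^α - z^α| ≤ |α| * z^(α-1) := by
  obtain ⟨c, hc, hceq⟩ := exists_hasDerivAt_eq_slope (fun x : ℝ => x ^ α)
    (fun x => α * x^(α-1)) (by linarith : z < z+1)
    (fun x hx => (Real.continuousAt_rpow_const x α
      (Or.inl (ne_of_gt (lt_of_lt_of_le hz hx.1)))).continuousWithinAt)
    (fun x hx => Real.hasDerivAt_rpow_const (Or.inl (ne_of_gt (hz.trans hx.1))))
  have hc0 : 0 < c := hz.trans hc.1
  have : (z+1)^α - z^α = α * c^(α-1) := by
    rw [hceq]; field_simp; ring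
  rw [this, abs_mul, abs_of_nonneg (Real.rpow_nonneg hc0.le _)]
  exact mul_le_mul_of_nonneg_left
    (Real.rpow_le_rpow_of_nonpos hz hc.1.le (by linarith)) (abs_nonneg _)

/-- |(z+1)^α - z^α| is antitone in z on (0,∞). -/
lemma habs_anti (α : ℝ) (hα1 : α < 1) {z y : ℝ} (hz : 0 < z) (hzy : z ≤ y) :
    |(y+1)^α - y^α| ≤ |(z+1)^α - z^α| := by
  rcases eq_or_lt_of_le hzy with rfl | hlt
  · exact le_refl _
  have hy0 : 0 < y := hz.trans hlt
  obtain ⟨c, hc, hceq⟩ := exists_hasDerivAt_eq_slope (fun t : ℝ => (t+1)^α - t^α)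
    (fun t => α*(t+1)^(α-1) - α*t^(α-1)) hlt
    (by
      apply ContinuousOn.sub
      · apply ContinuousOn.rpow_const (by fun_prop)
        intro x hx
        exact Or.inl (by nlinarith [hx.1])
      · apply ContinuousOn.rpow_const (by fun_prop)
        intro x hx
        exact Or.inl (ne_of_gt (lt_of_lt_of_le hz hx.1)))
    (by
      intro x hx
      have hx0 : 0 < x := hz.trans hx.1
      have h1 : HasDerivAt (fun t : ℝ => (t+1)^α) (α*(x+1)^(α-1)) x := by
        have := (Real.hasDerivAt_rpow_const (p := α)
          (Or.inl (by positivity : x + 1 ≠ 0))).comp x ((hasDerivAt_id x).add_const 1)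
        simpa [Function.comp_def] using this
      have h2 : HasDerivAt (fun t : ℝ => t^α) (α*x^(α-1)) x :=
        Real.hasDerivAt_rpow_const (Or.inl (ne_of_gt hx0))
      exact h1.sub h2)
  have hc0 : 0 < c := hz.trans hc.1
  have key : (c+1)^(α-1) ≤ c^(α-1) :=
    Real.rpow_le_rpow_of_nonpos hc0 (by linarith) (by linarith)
  rw [eq_div_iff (by linarith : y - z ≠ 0)] at hceq
  have heq : (y+1)^α - y^α - ((z+1)^α - z^α)
      = (α*(c+1)^(α-1) - α*c^(α-1)) * (y - z) := hceq.symm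
  rcases le_or_gt 0 α with hα0 | hα0
  · have hy' : (0:ℝ) ≤ (y+1)^α - y^α :=
      sub_nonneg.2 (Real.rpow_le_rpow hy0.le (by linarith) hα0)
    have hz' : (0:ℝ) ≤ (z+1)^α - z^α :=
      sub_nonneg.2 (Real.rpow_le_rpow hz.le (by linarith) hα0)
    have hD : α*(c+1)^(α-1) - α*c^(α-1) ≤ 0 := by nlinarith
    have := mul_nonpos_of_nonpos_of_nonneg hD (by linarith : (0:ℝ) ≤ y - z)
    rw [abs_of_nonneg hy', abs_of_nonneg hz']
    linarith
  · have hy' : (y+1)^α - y^α ≤ 0 :=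
      sub_nonpos.2 (Real.rpow_le_rpow_of_nonpos hy0 (by linarith) hα0.le)
    have hz' : (z+1)^α - z^α ≤ 0 :=
      sub_nonpos.2 (Real.rpow_le_rpow_of_nonpos hz (by linarith) hα0.le)
    have hD : 0 ≤ α*(c+1)^(α-1) - α*c^(α-1) := by nlinarith
    have := mul_nonneg hD (by linarith : (0:ℝ) ≤ y - z)
    rw [abs_of_nonpos hy', abs_of_nonpos hz']
    linarith

lemma hdelta (α : ℝ) {z δ : ℝ} (hz : 0 < z) (h0 : 0 ≤ δ) (h1 : δ ≤ 1) :
    |(z+δ)^α - z^α| ≤ |(z+1)^α - z^α| := by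
  rcases le_or_gt 0 α with hα | hα
  · have a1 : z^α ≤ (z+δ)^α := Real.rpow_le_rpow hz.le (by linarith) hα
    have a2 : (z+δ)^α ≤ (z+1)^α := Real.rpow_le_rpow (by linarith) (by linarith) hα
    rw [abs_of_nonneg (by linarith), abs_of_nonneg (by linarith)]; linarith
  · have a1 : (z+δ)^α ≤ z^α := Real.rpow_le_rpow_of_nonpos hz (by linarith) hα.le
    have a2 : (z+1)^α ≤ (z+δ)^α :=
      Real.rpow_le_rpow_of_nonpos (by linarith) (by linarith) hα.le
    rw [abs_of_nonpos (by linarith), abs_of_nonpos (by linarith)]; linarith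

lemma g_contOn (α : ℝ) : ContinuousOn (fun z : ℝ => ((z+1)^α - z^α)^2) (Ioi 0) := by
  apply ContinuousOn.pow
  apply ContinuousOn.sub
  · exact ContinuousOn.rpow_const (by fun_prop) fun x hx => Or.inl (by
      have : (0:ℝ) < x := hx; positivity)
  · exact ContinuousOn.rpow_const (by fun_prop) fun x hx => Or.inl (ne_of_gt hx)

lemma g_integrable (α : ℝ) (hα : α ∈ Ioo (-(1:ℝ)/2) (1/2)) :
    IntegrableOn (fun z : ℝ => ((z+1)^α - z^α)^2) (Ioi 0) := by
  obtain ⟨hαl, hαr⟩ := hα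
  rw [← Ioc_union_Ioi_eq_Ioi (zero_le_one (α := ℝ))]
  apply MeasureTheory.IntegrableOn.union
  · -- on Ioc 0 1
    apply MeasureTheory.Integrable.mono'
      (g := fun z : ℝ => 2*((z+1)^α)^2 + 2*(z^α)^2)
    · apply MeasureTheory.Integrable.add
      · apply MeasureTheory.Integrable.const_mul
        apply MeasureTheory.IntegrableOn.mono_set (t := Icc (0:ℝ) 1) _ Ioc_subset_Icc_self
        apply ContinuousOn.integrableOn_Icc
        apply ContinuousOn.pow
        exact ContinuousOn.rpow_const (by fun_prop) fun x hx => Or.inl (by nlinarith [hx.1])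
      · apply MeasureTheory.Integrable.const_mul
        have hint : IntegrableOn (fun z : ℝ => z ^ (2*α)) (Ioc 0 1) :=
          (intervalIntegrable_iff_integrableOn_Ioc_of_le zero_le_one).mp
            (intervalIntegral.intervalIntegrable_rpow' (by linarith))
        apply hint.congr_fun _ measurableSet_Ioc
        intro z hz
        show z ^ (2*α) = (z^α)^2
        rw [pow_two (z ^ α), ← Real.rpow_add hz.1]; ring_nf
    · exact ((g_contOn α).mono (Ioc_subset_Ioi_self)).aestronglyMeasurable measurableSet_Ioc
    · filter_upwards [ae_restrict_mem measurableSet_Ioc] with z hz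
      rw [Real.norm_eq_abs, abs_of_nonneg (sq_nonneg _)]
      nlinarith [sq_nonneg ((z+1)^α + z^α)]
  · -- on Ioi 1
    apply MeasureTheory.Integrable.mono'
      (g := fun z : ℝ => α^2 * z^(2*α-2))
    · exact (integrableOn_Ioi_rpow_of_lt (by linarith) one_pos).const_mul _
    · exact ((g_contOn α).mono (Ioi_subset_Ioi zero_le_one)).aestronglyMeasurable
        measurableSet_Ioi
    · filter_upwards [ae_restrict_mem measurableSet_Ioi] with z hz
      have hz0 : (0:ℝ) < z := lt_trans one_pos hz
      have h1 := aux_mvt α (by linarith) hz0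
      rw [Real.norm_eq_abs, abs_of_nonneg (sq_nonneg _)]
      have h2 : ((z+1)^α - z^α)^2 ≤ (|α| * z^(α-1))^2 := by
        rw [← sq_abs]
        exact pow_le_pow_left₀ (abs_nonneg _) h1 2
      calc ((z+1)^α - z^α)^2 ≤ (|α| * z^(α-1))^2 := h2
        _ = α^2 * z^(2*α-2) := by
            rw [mul_pow, sq_abs, pow_two (z ^ (α-1)), ← Real.rpow_add hz0]
            ring_nf

/-- The quantity `A_n(v,s)` from Lemma A.2 of the paper. -/
noncomputable def A (α : ℝ) (n : ℕ) (v s : ℝ) : ℝ :=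
  (n : ℝ) ^ (2*α + 1) *
    ∫ u in Set.Ioc (0:ℝ) ((⌊(n:ℝ) * v⌋ : ℝ) / n),
      ((s - u) ^ α - ((⌊(n:ℝ) * s⌋ : ℝ) / n - u) ^ α) *
        ((v - u) ^ α - ((⌊(n:ℝ) * v⌋ : ℝ) / n - u) ^ α)

lemma main_bound (α : ℝ) (hα : α ∈ Set.Ioo (-(1:ℝ)/2) (1/2)) (n : ℕ) (hn : 1 ≤ n)
    (v s : ℝ) (hv : 0 ≤ v) (hvs : v ≤ s) :
    |A α n v s| ≤ ∫ z in Set.Ioi (0:ℝ), ((z + 1) ^ α - z ^ α)^2 := by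
  obtain ⟨hαl, hαr⟩ := hα
  have hN1 : (1:ℝ) ≤ (n:ℝ) := by exact_mod_cast hn
  set N : ℝ := (n:ℝ) with hNdef
  have hN0 : (0:ℝ) < N := by linarith
  set m : ℝ := ((⌊N * v⌋ : ℤ) : ℝ) with hm
  set k : ℝ := ((⌊N * s⌋ : ℤ) : ℝ) with hk
  have hm0 : (0:ℝ) ≤ m := by
    have : (0:ℤ) ≤ ⌊N * v⌋ := Int.floor_nonneg.mpr (by positivity)
    simp only [hm]; exact_mod_cast this
  have hmk : m ≤ k := by
    have : ⌊N * v⌋ ≤ ⌊N * s⌋ := Int.floor_le_floor (by nlinarith)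
    simp only [hm, hk]; exact_mod_cast this
  have hmv : m ≤ N * v := Int.floor_le _
  have hv1 : N * v < m + 1 := Int.lt_floor_add_one _
  have hks : k ≤ N * s := Int.floor_le _
  have hs1 : N * s < k + 1 := Int.lt_floor_add_one _
  set g : ℝ → ℝ := fun z => ((z + 1) ^ α - z ^ α)^2 with hg
  have hgnn : ∀ z, 0 ≤ g z := fun z => sq_nonneg _
  have hgint : IntegrableOn g (Ioi 0) := g_integrable α ⟨hαl, hαr⟩
  have hmN0 : (0:ℝ) ≤ m / N := div_nonneg hm0 hN0.le
  have hP0 : 0 < N ^ α := Real.rpow_pos_of_pos hN0 α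
  -- integrability of the bound
  have i1 : IntervalIntegrable g volume 0 m :=
    (intervalIntegrable_iff_integrableOn_Ioc_of_le hm0).mpr
      (hgint.mono_set fun x hx => hx.1)
  have i2' : IntervalIntegrable (fun x => g (m - x)) volume 0 m := by
    simpa using (i1.comp_sub_left m).symm
  have i3' : IntervalIntegrable (fun x => g (m - N*x)) volume 0 (m/N) := by
    simpa using i2'.comp_mul_left (c := N) enorm_ne_top enorm_ne_top
  have Bint : IntegrableOn (fun u => ((N ^ α)⁻¹)^2 * g (m - N * u)) (Ioc 0 (m/N)) :=
    ((intervalIntegrable_iff_integrableOn_Ioc_of_le hmN0).mp i3').const_mul _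
  -- pointwise bound
  have hbound : ∀ᵐ u ∂(volume.restrict (Ioc (0:ℝ) (m/N))),
      ‖((s - u) ^ α - (k / N - u) ^ α) * ((v - u) ^ α - (m / N - u) ^ α)‖
        ≤ ((N ^ α)⁻¹)^2 * g (m - N * u) := by
    rw [← MeasureTheory.restrict_Ioo_eq_restrict_Ioc]
    filter_upwards [ae_restrict_mem measurableSet_Ioo] with u hu
    obtain ⟨hu0, hum⟩ := hu
    have hNu : N * u < m := by
      rw [lt_div_iff₀ hN0] at hum; linarith [hum]
    have hz0 : (0:ℝ) < m - N * u := by linarith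
    have f1 : (s-u)^α = (N*s - N*u)^α / N^α := by
      rw [show s - u = (N*s - N*u)/N by field_simp; try ring,
        Real.div_rpow (by nlinarith) hN0.le]
    have f2 : (k/N - u)^α = (k - N*u)^α / N^α := by
      rw [show k/N - u = (k - N*u)/N by field_simp; try ring,
        Real.div_rpow (by nlinarith) hN0.le]
    have f3 : (v-u)^α = (N*v - N*u)^α / N^α := by
      rw [show v - u = (N*v - N*u)/N by field_simp; try ring,
        Real.div_rpow (by nlinarith) hN0.le]
    have f4 : (m/N - u)^α = (m - N*u)^α / N^α := by
      rw [show m/N - u = (m - N*u)/N by field_simp; try ring,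
        Real.div_rpow (by nlinarith) hN0.le]
    have bound1 : |(s-u)^α - (k/N - u)^α|
        ≤ (N^α)⁻¹ * |(m - N*u + 1)^α - (m - N*u)^α| := by
      rw [f1, f2, div_sub_div_same, abs_div, abs_of_pos hP0, div_eq_inv_mul]
      apply mul_le_mul_of_nonneg_left _ (inv_nonneg.mpr hP0.le)
      have hy0 : (0:ℝ) < k - N*u := by linarith
      have e : N*s - N*u = (k - N*u) + (N*s - k) := by ring
      rw [e]
      exact (hdelta α hy0 (by linarith) (by linarith)).trans
        (habs_anti α (by linarith) hz0 (by linarith))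
    have bound2 : |(v-u)^α - (m/N - u)^α|
        ≤ (N^α)⁻¹ * |(m - N*u + 1)^α - (m - N*u)^α| := by
      rw [f3, f4, div_sub_div_same, abs_div, abs_of_pos hP0, div_eq_inv_mul]
      apply mul_le_mul_of_nonneg_left _ (inv_nonneg.mpr hP0.le)
      have e : N*v - N*u = (m - N*u) + (N*v - m) := by ring
      rw [e]
      exact hdelta α hz0 (by linarith) (by linarith)
    rw [Real.norm_eq_abs, abs_mul]
    calc |(s-u)^α - (k/N - u)^α| * |(v-u)^α - (m/N - u)^α|
        ≤ ((N^α)⁻¹ * |(m - N*u + 1)^α - (m - N*u)^α|) *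
          ((N^α)⁻¹ * |(m - N*u + 1)^α - (m - N*u)^α|) :=
          mul_le_mul bound1 bound2 (abs_nonneg _) (by positivity)
      _ = ((N ^ α)⁻¹)^2 * g (m - N * u) := by
          simp only [hg]
          rw [← sq_abs ((m - N*u + 1)^α - (m - N*u)^α)]; ring
  -- the key estimate
  have key : |∫ u in Ioc (0:ℝ) (m/N),
      ((s - u) ^ α - (k / N - u) ^ α) * ((v - u) ^ α - (m / N - u) ^ α)|
      ≤ ∫ u in Ioc (0:ℝ) (m/N), ((N ^ α)⁻¹)^2 * g (m - N * u) := by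
    rw [← Real.norm_eq_abs]
    exact norm_integral_le_of_norm_le Bint hbound
  -- compute the bound integral
  have comp : ∫ u in Ioc (0:ℝ) (m/N), g (m - N*u)
      = N⁻¹ * ∫ x in Ioc (0:ℝ) m, g x := by
    rw [← intervalIntegral.integral_of_le hmN0, ← intervalIntegral.integral_of_le hm0]
    rw [intervalIntegral.integral_comp_mul_left (fun x => g (m - x)) (ne_of_gt hN0)]
    rw [mul_zero, mul_div_cancel₀ _ (ne_of_gt hN0)]
    rw [intervalIntegral.integral_comp_sub_left (fun x => g x) m]
    simp [smul_eq_mul]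
  have constint : ∫ u in Ioc (0:ℝ) (m/N), ((N ^ α)⁻¹)^2 * g (m - N * u)
      = ((N ^ α)⁻¹)^2 * (N⁻¹ * ∫ x in Ioc (0:ℝ) m, g x) := by
    rw [MeasureTheory.integral_const_mul, comp]
  have hJ : ∫ x in Ioc (0:ℝ) m, g x ≤ ∫ z in Ioi (0:ℝ), g z :=
    setIntegral_mono_set hgint (Filter.Eventually.of_forall fun z => hgnn z)
      (HasSubset.Subset.eventuallyLE Ioc_subset_Ioi_self)
  have hJ0 : 0 ≤ ∫ x in Ioc (0:ℝ) m, g x :=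
    setIntegral_nonneg measurableSet_Ioc fun x _ => hgnn x
  have hfac : N ^ (2*α+1) * (((N ^ α)⁻¹)^2 * N⁻¹) = 1 := by
    have hPow : N^(2*α+1) = N^α * N^α * N := by
      rw [show 2*α+1 = α + α + 1 by ring, Real.rpow_add hN0, Real.rpow_add hN0,
        Real.rpow_one]
    rw [hPow]
    field_simp
  -- put it together
  have hA : A α n v s = N ^ (2*α+1) * ∫ u in Ioc (0:ℝ) (m/N),
      ((s - u) ^ α - (k / N - u) ^ α) * ((v - u) ^ α - (m / N - u) ^ α) := rfl
  rw [hA, abs_mul, abs_of_nonneg (Real.rpow_nonneg hN0.le _)]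
  calc N ^ (2*α+1) * |∫ u in Ioc (0:ℝ) (m/N),
      ((s - u) ^ α - (k / N - u) ^ α) * ((v - u) ^ α - (m / N - u) ^ α)|
      ≤ N ^ (2*α+1) * ∫ u in Ioc (0:ℝ) (m/N), ((N ^ α)⁻¹)^2 * g (m - N * u) :=
        mul_le_mul_of_nonneg_left key (Real.rpow_nonneg hN0.le _)
    _ = (N ^ (2*α+1) * (((N ^ α)⁻¹)^2 * N⁻¹)) * ∫ x in Ioc (0:ℝ) m, g x := by
        rw [constint]; ring
    _ = ∫ x in Ioc (0:ℝ) m, g x := by rw [hfac, one_mul]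
    _ ≤ ∫ z in Ioi (0:ℝ), g z := hJ

/-- boundedness part of Lemma A.2. -/
theorem stmt_8 (α M : ℝ) (hα : α ∈ Set.Ioo (-(1:ℝ)/2) (1/2)) (hM : 0 < M) :
    (∀ n : ℕ, 1 ≤ n → ∀ v s : ℝ, 0 ≤ v → v ≤ s → s ≤ M →
      |A α n v s| ≤ ∫ z in Set.Ioi (0:ℝ), ((z + 1) ^ α - z ^ α)^2) ∧
    BddAbove {x : ℝ | ∃ n : ℕ, ∃ v s : ℝ,
      1 ≤ n ∧ 0 ≤ v ∧ v ≤ s ∧ s ≤ M ∧ x = |A α n v s|} := by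
  constructor
  · intro n hn v s hv hvs _
    exact main_bound α hα n hn v s hv hvs
  · refine ⟨∫ z in Set.Ioi (0:ℝ), ((z + 1) ^ α - z ^ α)^2, ?_⟩
    rintro x ⟨n, v, s, hn, hv, hvs, hsM, rfl⟩
    exact main_bound α hα n hn v s hv hvs
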